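/- There exist positive constants c₁, c₂ such that for all a, b, c > 0 with a·c > 1, c₁·(a+b)^{3/2}/(√b·(1+b·c)) ≤ ∫_0^∞ ((a+b+v)^{3/2}/(b+v)^{3/2})·e^{-c·v} dv ≤ c₂·(a+b)^{3/2}/(√b·(1+b·c)). -/

import Mathlib

open Real MeasureTheory Set Filter Topology

lemma intE {c : ℝ} (hc : 0 < c) : ∫ x in Set.Ioi (0:ℝ), Real.exp (-c * x) = 1 / c := by
  have h := MeasureTheory.integral_comp_mul_left_Ioi (fun x => Real.exp (-x)) 0 hc
  simp only [mul_zero, integral_exp_neg_Ioi_zero, smul_eq_mul, mul_one] at h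
  simpa [neg_mul, one_div] using h

lemma integrableOn_shift_rpow {b : ℝ} (hb : 0 < b) :
    MeasureTheory.IntegrableOn (fun v : ℝ => (b + v) ^ (-(3:ℝ)/2)) (Set.Ioi 0) := by
  have hcont : ContinuousOn (fun v : ℝ => (b + v) ^ (-(3:ℝ)/2)) (Set.Icc 0 b) := by
    apply ContinuousOn.rpow_const (continuousOn_const.add continuousOn_id)
    intro x hx
    left
    simp only [Pi.add_apply, id_eq]
    nlinarith [hx.1]
  have h1 : MeasureTheory.IntegrableOn (fun v : ℝ => (b + v) ^ (-(3:ℝ)/2)) (Set.Ioc 0 b) :=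
    (hcont.integrableOn_compact isCompact_Icc).mono_set Set.Ioc_subset_Icc_self
  have h2 : MeasureTheory.IntegrableOn (fun v : ℝ => (b + v) ^ (-(3:ℝ)/2)) (Set.Ioi b) := by
    refine (integrableOn_Ioi_rpow_of_lt (show -(3:ℝ)/2 < -1 by norm_num) hb).mono'
      ?_ ?_
    · apply ContinuousOn.aestronglyMeasurable ?_ measurableSet_Ioi
      apply ContinuousOn.rpow_const (continuousOn_const.add continuousOn_id)
      intro x hx
      simp only [Set.mem_Ioi] at hx
      left
      simp only [Pi.add_apply, id_eq]
      nlinarith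
    · filter_upwards [MeasureTheory.ae_restrict_mem measurableSet_Ioi] with x hx
      simp only [Set.mem_Ioi] at hx
      rw [Real.norm_eq_abs, abs_of_nonneg (Real.rpow_nonneg (by linarith) _)]
      exact Real.rpow_le_rpow_of_nonpos (by linarith) (by linarith) (by norm_num)
  rw [← Set.Ioc_union_Ioi_eq_Ioi hb.le]
  exact h1.union h2

lemma int_shift_rpow {b : ℝ} (hb : 0 < b) :
    ∫ v in Set.Ioi (0:ℝ), (b + v) ^ (-(3:ℝ)/2) = 2 / Real.sqrt b := by
  have hderiv : ∀ x ∈ Set.Ici (0:ℝ),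
      HasDerivAt (fun v : ℝ => -2 * (b + v) ^ (-(1:ℝ)/2)) ((b + x) ^ (-(3:ℝ)/2)) x := by
    intro x hx
    simp only [Set.mem_Ici] at hx
    have hbx : (0:ℝ) < b + x := by linarith
    have h1 : HasDerivAt (fun v : ℝ => b + v) 1 x := (hasDerivAt_id x).const_add b
    have h2 := (h1.rpow_const (p := -(1:ℝ)/2) (Or.inl hbx.ne')).const_mul (-2 : ℝ)
    refine h2.congr_deriv ?_
    rw [show -(1:ℝ)/2 - 1 = -(3:ℝ)/2 by norm_num]
    ring
  have htend : Tendsto (fun v : ℝ => -2 * (b + v) ^ (-(1:ℝ)/2)) atTop (𝓝 0) := by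
    have h0 : Tendsto (fun x : ℝ => x ^ (-((1:ℝ)/2))) atTop (𝓝 0) :=
      tendsto_rpow_neg_atTop (by norm_num)
    have h1 : Tendsto (fun v : ℝ => b + v) atTop atTop :=
      tendsto_atTop_add_const_left _ b tendsto_id
    have := (h0.comp h1).const_mul (-2 : ℝ)
    simpa [Function.comp, neg_div] using this
  have h := integral_Ioi_of_hasDerivAt_of_tendsto' hderiv (integrableOn_shift_rpow hb) htend
  rw [h, add_zero, show -(1:ℝ)/2 = -((1:ℝ)/2) by norm_num, Real.rpow_neg hb.le,
    Real.sqrt_eq_rpow]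
  ring

lemma rpow32 {b : ℝ} (hb : 0 ≤ b) : b ^ ((3:ℝ)/2) = b * Real.sqrt b := by
  rw [show (3:ℝ)/2 = 1 + 1/2 by norm_num, Real.rpow_add' hb (by norm_num), Real.rpow_one,
    Real.sqrt_eq_rpow]

lemma sqrt2_le : Real.sqrt 2 ≤ 1.5 := by
  nlinarith [Real.sq_sqrt (show (0:ℝ) ≤ 2 by norm_num), Real.sqrt_nonneg 2]

lemma key_sum {x y : ℝ} (hx : 0 ≤ x) (hy : 0 ≤ y) :
    (x + y) ^ ((3:ℝ)/2) ≤ 2 * Real.sqrt 2 * (x ^ ((3:ℝ)/2) + y ^ ((3:ℝ)/2)) := by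
  have hm : x + y ≤ 2 * max x y := by
    rcases le_total x y with h | h
    · simp [max_eq_right h]; linarith
    · simp [max_eq_left h]; linarith
  have h1 : (x + y) ^ ((3:ℝ)/2) ≤ (2 * max x y) ^ ((3:ℝ)/2) :=
    Real.rpow_le_rpow (by linarith) hm (by norm_num)
  have h2 : (2 * max x y) ^ ((3:ℝ)/2) = 2 ^ ((3:ℝ)/2) * (max x y) ^ ((3:ℝ)/2) :=
    Real.mul_rpow (by norm_num) (le_max_iff.mpr (Or.inl hx))
  have h3 : (max x y) ^ ((3:ℝ)/2) ≤ x ^ ((3:ℝ)/2) + y ^ ((3:ℝ)/2) := by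
    rcases le_total x y with h | h
    · rw [max_eq_right h]; nlinarith [Real.rpow_nonneg hx ((3:ℝ)/2)]
    · rw [max_eq_left h]; nlinarith [Real.rpow_nonneg hy ((3:ℝ)/2)]
  have h4 : (2:ℝ) ^ ((3:ℝ)/2) = 2 * Real.sqrt 2 := rpow32 (by norm_num)
  calc (x + y) ^ ((3:ℝ)/2) ≤ 2 ^ ((3:ℝ)/2) * (max x y) ^ ((3:ℝ)/2) := by rw [← h2]; exact h1
    _ ≤ 2 ^ ((3:ℝ)/2) * (x ^ ((3:ℝ)/2) + y ^ ((3:ℝ)/2)) := by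
        apply mul_le_mul_of_nonneg_left h3 (Real.rpow_nonneg (by norm_num) _)
    _ = 2 * Real.sqrt 2 * (x ^ ((3:ℝ)/2) + y ^ ((3:ℝ)/2)) := by rw [h4]

lemma contOn_f {a b c : ℝ} (hb : 0 < b) :
    ContinuousOn (fun v : ℝ => ((a + b + v) ^ ((3:ℝ)/2) / (b + v) ^ ((3:ℝ)/2)) * Real.exp (-c * v))
      (Set.Ioi 0) := by
  apply ContinuousOn.mul
  · apply ContinuousOn.div
    · exact ((continuous_const.add continuous_id).rpow_const
        (fun x => Or.inr (by norm_num))).continuousOn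
    · exact ((continuous_const.add continuous_id).rpow_const
        (fun x => Or.inr (by norm_num))).continuousOn
    · intro x hx
      simp only [Set.mem_Ioi] at hx
      exact (Real.rpow_pos_of_pos (by linarith) _).ne'
  · exact (Real.continuous_exp.comp (continuous_const.mul continuous_id)).continuousOn

lemma contOn_g2 {b c : ℝ} (hb : 0 < b) :
    ContinuousOn (fun v : ℝ => (b + v) ^ (-(3:ℝ)/2) * Real.exp (-c * v)) (Set.Ioi 0) := by
  apply ContinuousOn.mul
  · apply ContinuousOn.rpow_const (continuousOn_const.add continuousOn_id)
    intro x hx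
    simp only [Set.mem_Ioi] at hx
    left
    simp only [Pi.add_apply, id_eq]
    nlinarith
  · exact (Real.continuous_exp.comp (continuous_const.mul continuous_id)).continuousOn

lemma int_g2 {b c : ℝ} (hb : 0 < b) (hc : 0 < c) :
    MeasureTheory.IntegrableOn (fun v : ℝ => (b + v) ^ (-(3:ℝ)/2) * Real.exp (-c * v))
      (Set.Ioi 0) := by
  refine (integrableOn_shift_rpow hb).mono'
    ((contOn_g2 (c := c) hb).aestronglyMeasurable measurableSet_Ioi) ?_
  filter_upwards [MeasureTheory.ae_restrict_mem measurableSet_Ioi] with x hx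
  simp only [Set.mem_Ioi] at hx
  have hbx : (0:ℝ) ≤ b + x := by linarith
  rw [Real.norm_eq_abs, abs_of_nonneg (by positivity)]
  calc (b + x) ^ (-(3:ℝ)/2) * Real.exp (-c * x)
      ≤ (b + x) ^ (-(3:ℝ)/2) * 1 := by
        apply mul_le_mul_of_nonneg_left _ (Real.rpow_nonneg hbx _)
        exact Real.exp_le_one_iff.mpr (by nlinarith)
    _ = (b + x) ^ (-(3:ℝ)/2) := mul_one _

lemma int_f {a b c : ℝ} (ha : 0 < a) (hb : 0 < b) (hc : 0 < c) :
    MeasureTheory.IntegrableOn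
      (fun v : ℝ => ((a + b + v) ^ ((3:ℝ)/2) / (b + v) ^ ((3:ℝ)/2)) * Real.exp (-c * v))
      (Set.Ioi 0) := by
  refine ((exp_neg_integrableOn_Ioi 0 hc).const_mul (((a + b) / b) ^ ((3:ℝ)/2))).mono'
    ((contOn_f hb).aestronglyMeasurable measurableSet_Ioi) ?_
  filter_upwards [MeasureTheory.ae_restrict_mem measurableSet_Ioi] with x hx
  simp only [Set.mem_Ioi] at hx
  have hbx : (0:ℝ) < b + x := by linarith
  have habx : (0:ℝ) < a + b + x := by linarith
  rw [Real.norm_eq_abs, abs_of_nonneg (by positivity)]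
  have h1 : (a + b + x) ^ ((3:ℝ)/2) / (b + x) ^ ((3:ℝ)/2) = ((a + b + x) / (b + x)) ^ ((3:ℝ)/2) :=
    (Real.div_rpow habx.le hbx.le _).symm
  have h2 : (a + b + x) / (b + x) ≤ (a + b) / b := by
    rw [div_le_div_iff₀ hbx hb]
    nlinarith
  rw [h1]
  apply mul_le_mul_of_nonneg_right _ (Real.exp_pos _).le
  exact Real.rpow_le_rpow (by positivity) h2 (by norm_num)

lemma J_bound {b c : ℝ} (hb : 0 < b) (hc : 0 < c) :
    ∫ v in Set.Ioi (0:ℝ), (b + v) ^ (-(3:ℝ)/2) * Real.exp (-c * v)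
      ≤ 4 / (Real.sqrt b * (1 + b * c)) := by
  have hu : 0 < Real.sqrt b := Real.sqrt_pos.mpr hb
  have hu2 : Real.sqrt b ^ 2 = b := Real.sq_sqrt hb.le
  have hw : 0 < 1 + b * c := by positivity
  rcases le_total (b * c) 1 with h | h
  · have h1 : ∫ v in Set.Ioi (0:ℝ), (b + v) ^ (-(3:ℝ)/2) * Real.exp (-c * v)
        ≤ ∫ v in Set.Ioi (0:ℝ), (b + v) ^ (-(3:ℝ)/2) := by
      refine setIntegral_mono_on (int_g2 hb hc) (integrableOn_shift_rpow hb)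
        measurableSet_Ioi ?_
      intro x hx
      simp only [Set.mem_Ioi] at hx
      calc (b + x) ^ (-(3:ℝ)/2) * Real.exp (-c * x)
          ≤ (b + x) ^ (-(3:ℝ)/2) * 1 := by
            apply mul_le_mul_of_nonneg_left _ (Real.rpow_nonneg (by linarith) _)
            exact Real.exp_le_one_iff.mpr (by nlinarith)
        _ = (b + x) ^ (-(3:ℝ)/2) := mul_one _
    rw [int_shift_rpow hb] at h1
    refine h1.trans ?_
    rw [div_le_div_iff₀ hu (by positivity)]
    nlinarith
  · have h1 : ∫ v in Set.Ioi (0:ℝ), (b + v) ^ (-(3:ℝ)/2) * Real.exp (-c * v)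
        ≤ ∫ v in Set.Ioi (0:ℝ), b ^ (-(3:ℝ)/2) * Real.exp (-c * v) := by
      refine setIntegral_mono_on (int_g2 hb hc) ((exp_neg_integrableOn_Ioi 0 hc).const_mul _)
        measurableSet_Ioi ?_
      intro x hx
      simp only [Set.mem_Ioi] at hx
      apply mul_le_mul_of_nonneg_right _ (Real.exp_pos _).le
      exact Real.rpow_le_rpow_of_nonpos hb (by linarith) (by norm_num)
    rw [MeasureTheory.integral_const_mul, intE hc] at h1
    refine h1.trans ?_
    have hb32 : b ^ (-(3:ℝ)/2) = 1 / (b * Real.sqrt b) := by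
      rw [show -(3:ℝ)/2 = -((3:ℝ)/2) by norm_num, Real.rpow_neg hb.le, rpow32 hb.le, one_div]
    rw [hb32, div_mul_div_comm, one_mul, div_le_div_iff₀ (by positivity) (by positivity)]
    nlinarith [mul_pos hu (mul_pos hb hc)]

lemma E_bound {a b c : ℝ} (ha : 0 < a) (hb : 0 < b) (hc : 0 < c) (hac : 1 < a * c) :
    1 / c ≤ 2 * ((a + b) ^ ((3:ℝ)/2) / (Real.sqrt b * (1 + b * c))) := by
  have hu : 0 < Real.sqrt b := Real.sqrt_pos.mpr hb
  have hu2 : Real.sqrt b ^ 2 = b := Real.sq_sqrt hb.le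
  have hw : 0 < 1 + b * c := by positivity
  have hs : b ^ ((3:ℝ)/2) ≤ (a + b) ^ ((3:ℝ)/2) :=
    Real.rpow_le_rpow hb.le (by linarith) (by norm_num)
  rw [mul_div_assoc' , div_le_div_iff₀ hc (by positivity), one_mul]
  rcases le_total (b * c) 1 with h | h
  · have hba : b < a := by nlinarith
    have hua : Real.sqrt b ≤ Real.sqrt a := Real.sqrt_le_sqrt hba.le
    have ha32 : a ^ ((3:ℝ)/2) = a * Real.sqrt a := rpow32 ha.le
    have has : a ^ ((3:ℝ)/2) ≤ (a + b) ^ ((3:ℝ)/2) :=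
      Real.rpow_le_rpow ha.le (by linarith) (by norm_num)
    have hca : 1 < a * c := hac
    -- need : sqrt b * (1 + b*c) ≤ 2 * (a+b)^{3/2} * c
    have h2 : Real.sqrt b * (1 + b * c) ≤ 2 * Real.sqrt b := by nlinarith
    have h3 : Real.sqrt b ≤ a * Real.sqrt a * c := by nlinarith [Real.sqrt_nonneg a]
    nlinarith
  · have hb32 : b ^ ((3:ℝ)/2) = b * Real.sqrt b := rpow32 hb.le
    nlinarith [Real.rpow_nonneg (show (0:ℝ) ≤ a + b by linarith) ((3:ℝ)/2)]

set_option maxHeartbeats 1000000 in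
theorem stmt1 :
    ∃ c₁ c₂ : ℝ, 0 < c₁ ∧ 0 < c₂ ∧
      ∀ a b c : ℝ, 0 < a → 0 < b → 0 < c → 1 < a * c →
        c₁ * ((a + b) ^ ((3:ℝ)/2) / (Real.sqrt b * (1 + b * c))) ≤
          (∫ v in Set.Ioi (0:ℝ), ((a + b + v) ^ ((3:ℝ)/2) / (b + v) ^ ((3:ℝ)/2)) * Real.exp (-c * v)) ∧
        (∫ v in Set.Ioi (0:ℝ), ((a + b + v) ^ ((3:ℝ)/2) / (b + v) ^ ((3:ℝ)/2)) * Real.exp (-c * v)) ≤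
          c₂ * ((a + b) ^ ((3:ℝ)/2) / (Real.sqrt b * (1 + b * c))) := by
  refine ⟨1/16, 18, by norm_num, by norm_num, fun a b c ha hb hc hac => ?_⟩
  have hu : 0 < Real.sqrt b := Real.sqrt_pos.mpr hb
  have hw : 0 < 1 + b * c := by positivity
  have hfi := int_f (c := c) ha hb hc
  have hS : (0:ℝ) ≤ (a + b) ^ ((3:ℝ)/2) := Real.rpow_nonneg (by linarith) _
  constructor
  · -- lower bound
    set t := min b (1/c) with ht_def
    have ht : 0 < t := lt_min hb (by positivity)
    have htb : t ≤ b := min_le_left _ _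
    have htc : c * t ≤ 1 := by
      have : t ≤ 1/c := min_le_right _ _
      calc c * t ≤ c * (1/c) := by apply mul_le_mul_of_nonneg_left this hc.le
        _ = 1 := by field_simp
    set K := (a + b) ^ ((3:ℝ)/2) / (2*b) ^ ((3:ℝ)/2) * Real.exp (-1) with hK_def
    have hKnn : 0 ≤ K := by positivity
    have hptK : ∀ v ∈ Set.Ioc (0:ℝ) t,
        K ≤ ((a + b + v) ^ ((3:ℝ)/2) / (b + v) ^ ((3:ℝ)/2)) * Real.exp (-c * v) := by
      intro v hv
      obtain ⟨hv0, hvt⟩ := hv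
      have h1 : (a + b) ^ ((3:ℝ)/2) ≤ (a + b + v) ^ ((3:ℝ)/2) :=
        Real.rpow_le_rpow (by linarith) (by linarith) (by norm_num)
      have h2 : (b + v) ^ ((3:ℝ)/2) ≤ (2*b) ^ ((3:ℝ)/2) :=
        Real.rpow_le_rpow (by linarith) (by linarith) (by norm_num)
      have h3 : Real.exp (-1) ≤ Real.exp (-c * v) := by
        apply Real.exp_le_exp.mpr
        have : c * v ≤ c * t := mul_le_mul_of_nonneg_left hvt hc.le
        linarith
      have hbv : (0:ℝ) < (b + v) ^ ((3:ℝ)/2) := Real.rpow_pos_of_pos (by linarith) _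
      apply mul_le_mul (div_le_div₀ (Real.rpow_nonneg (by linarith) _) h1 hbv h2) h3
        (Real.exp_pos _).le
      positivity
    have hconst : ∫ _ in Set.Ioc (0:ℝ) t, K = t * K := by
      rw [setIntegral_const, measureReal_def, Real.volume_Ioc, sub_zero, ENNReal.toReal_ofReal ht.le, smul_eq_mul]
    have hlow1 : t * K ≤ ∫ v in Set.Ioc (0:ℝ) t,
        ((a + b + v) ^ ((3:ℝ)/2) / (b + v) ^ ((3:ℝ)/2)) * Real.exp (-c * v) := by
      rw [← hconst]
      exact setIntegral_mono_on
        (MeasureTheory.integrableOn_const measure_Ioc_lt_top.ne)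
        (hfi.mono_set Set.Ioc_subset_Ioi_self) measurableSet_Ioc hptK
    have hlow2 : (∫ v in Set.Ioc (0:ℝ) t,
          ((a + b + v) ^ ((3:ℝ)/2) / (b + v) ^ ((3:ℝ)/2)) * Real.exp (-c * v))
        ≤ ∫ v in Set.Ioi (0:ℝ),
          ((a + b + v) ^ ((3:ℝ)/2) / (b + v) ^ ((3:ℝ)/2)) * Real.exp (-c * v) := by
      refine setIntegral_mono_set hfi ?_ (HasSubset.Subset.eventuallyLE Set.Ioc_subset_Ioi_self)
      filter_upwards [MeasureTheory.ae_restrict_mem measurableSet_Ioi] with x hx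
      simp only [Set.mem_Ioi] at hx
      have hx1 : (0:ℝ) < b + x := by linarith
      have hx2 : (0:ℝ) < a + b + x := by linarith
      positivity
    have key : 1/16 * ((a + b) ^ ((3:ℝ)/2) / (Real.sqrt b * (1 + b * c))) ≤ t * K := by
      have htw : b / (1 + b * c) ≤ t := by
        rw [le_min_iff]
        constructor
        · apply div_le_self hb.le (by nlinarith)
        · rw [div_le_div_iff₀ hw hc]
          nlinarith
      have hE3 : (1:ℝ)/3 ≤ Real.exp (-1) := by
        have h3 : Real.exp 1 ≤ 3 := by nlinarith [Real.exp_one_lt_d9.le]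
        rw [Real.exp_neg, one_div]
        exact inv_anti₀ (Real.exp_pos 1) h3
      have h2b : (2*b) ^ ((3:ℝ)/2) = 2 * Real.sqrt 2 * (b * Real.sqrt b) := by
        rw [Real.mul_rpow (by norm_num) hb.le, rpow32 (by norm_num : (0:ℝ) ≤ 2), rpow32 hb.le]
      calc 1/16 * ((a + b) ^ ((3:ℝ)/2) / (Real.sqrt b * (1 + b * c)))
          ≤ (b / (1 + b * c)) * K := by
            rw [hK_def, h2b]
            have hs2 : (0:ℝ) < Real.sqrt 2 := Real.sqrt_pos.mpr (by norm_num)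
            have hsb2 : Real.sqrt b * Real.sqrt b = b := Real.mul_self_sqrt hb.le
            have hre : b / (1 + b * c) * ((a + b) ^ ((3:ℝ)/2) / (2 * Real.sqrt 2 * (b * Real.sqrt b))
                  * Real.exp (-1))
                = (a + b) ^ ((3:ℝ)/2) / (Real.sqrt b * (1 + b * c))
                  * (Real.exp (-1) / (2 * Real.sqrt 2)) := by
              field_simp
            rw [hre]
            have h16 : (1:ℝ)/16 ≤ Real.exp (-1) / (2 * Real.sqrt 2) := by
              rw [div_le_div_iff₀ (by norm_num) (by positivity)]
              nlinarith [sqrt2_le, hE3]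
            have hR0 : (0:ℝ) ≤ (a + b) ^ ((3:ℝ)/2) / (Real.sqrt b * (1 + b * c)) := by positivity
            nlinarith [mul_le_mul_of_nonneg_left h16 hR0]
        _ ≤ t * K := mul_le_mul_of_nonneg_right htw hKnn
    exact key.trans (hlow1.trans hlow2)
  · -- upper bound
    have hpt : ∀ v ∈ Set.Ioi (0:ℝ),
        ((a + b + v) ^ ((3:ℝ)/2) / (b + v) ^ ((3:ℝ)/2)) * Real.exp (-c * v)
          ≤ 2 * Real.sqrt 2 * Real.exp (-c * v)
            + 2 * Real.sqrt 2 * a ^ ((3:ℝ)/2) * ((b + v) ^ (-(3:ℝ)/2) * Real.exp (-c * v)) := by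
      intro v hv
      simp only [Set.mem_Ioi] at hv
      have hbv : (0:ℝ) < b + v := by linarith
      have hbv32 : (0:ℝ) < (b + v) ^ ((3:ℝ)/2) := Real.rpow_pos_of_pos hbv _
      have hks := key_sum ha.le hbv.le
      have h1 : (a + b + v) ^ ((3:ℝ)/2) / (b + v) ^ ((3:ℝ)/2)
          ≤ 2 * Real.sqrt 2 * (a ^ ((3:ℝ)/2) + (b + v) ^ ((3:ℝ)/2)) / (b + v) ^ ((3:ℝ)/2) := by
        apply div_le_div₀ (by positivity) ?_ hbv32 le_rfl
        calc (a + b + v) ^ ((3:ℝ)/2) = (a + (b + v)) ^ ((3:ℝ)/2) := by ring_nf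
          _ ≤ 2 * Real.sqrt 2 * (a ^ ((3:ℝ)/2) + (b + v) ^ ((3:ℝ)/2)) := hks
      have h2 : 2 * Real.sqrt 2 * (a ^ ((3:ℝ)/2) + (b + v) ^ ((3:ℝ)/2)) / (b + v) ^ ((3:ℝ)/2)
            * Real.exp (-c * v)
          = 2 * Real.sqrt 2 * Real.exp (-c * v)
            + 2 * Real.sqrt 2 * a ^ ((3:ℝ)/2) * ((b + v) ^ (-(3:ℝ)/2) * Real.exp (-c * v)) := by
        rw [show -(3:ℝ)/2 = -((3:ℝ)/2) by norm_num, Real.rpow_neg hbv.le]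
        field_simp
        ring
      rw [← h2]
      exact mul_le_mul_of_nonneg_right h1 (Real.exp_pos _).le
    have hgi : MeasureTheory.IntegrableOn (fun v : ℝ =>
        2 * Real.sqrt 2 * Real.exp (-c * v)
          + 2 * Real.sqrt 2 * a ^ ((3:ℝ)/2) * ((b + v) ^ (-(3:ℝ)/2) * Real.exp (-c * v)))
        (Set.Ioi 0) :=
      ((exp_neg_integrableOn_Ioi 0 hc).const_mul _).add ((int_g2 hb hc).const_mul _)
    have hup1 := setIntegral_mono_on hfi hgi measurableSet_Ioi hpt
    rw [MeasureTheory.integral_add ((exp_neg_integrableOn_Ioi 0 hc).const_mul _)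
        ((int_g2 hb hc).const_mul _), MeasureTheory.integral_const_mul,
      MeasureTheory.integral_const_mul, intE hc] at hup1
    have hJ := J_bound hb hc
    have hE := E_bound ha hb hc hac
    have hJnn : (0:ℝ) ≤ ∫ v in Set.Ioi (0:ℝ), (b + v) ^ (-(3:ℝ)/2) * Real.exp (-c * v) := by
      apply setIntegral_nonneg measurableSet_Ioi
      intro x hx
      simp only [Set.mem_Ioi] at hx
      have : (0:ℝ) < b + x := by linarith
      positivity
    have ha32 : a ^ ((3:ℝ)/2) ≤ (a + b) ^ ((3:ℝ)/2) :=
      Real.rpow_le_rpow ha.le (by linarith) (by norm_num)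
    have hs2 : (0:ℝ) < Real.sqrt 2 := Real.sqrt_pos.mpr (by norm_num)
    refine hup1.trans ?_
    have step : 2 * Real.sqrt 2 * (1/c)
          + 2 * Real.sqrt 2 * a ^ ((3:ℝ)/2)
            * (∫ v in Set.Ioi (0:ℝ), (b + v) ^ (-(3:ℝ)/2) * Real.exp (-c * v))
        ≤ 2 * Real.sqrt 2 * (2 * ((a + b) ^ ((3:ℝ)/2) / (Real.sqrt b * (1 + b * c))))
          + 2 * Real.sqrt 2 * (a + b) ^ ((3:ℝ)/2) * (4 / (Real.sqrt b * (1 + b * c))) := by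
      apply add_le_add
      · exact mul_le_mul_of_nonneg_left hE (by positivity)
      · exact mul_le_mul (mul_le_mul_of_nonneg_left ha32 (by positivity)) hJ hJnn (by positivity)
    refine step.trans ?_
    have hR : (0:ℝ) ≤ (a + b) ^ ((3:ℝ)/2) / (Real.sqrt b * (1 + b * c)) := by positivity
    have heq : 2 * Real.sqrt 2 * (a + b) ^ ((3:ℝ)/2) * (4 / (Real.sqrt b * (1 + b * c)))
        = 8 * Real.sqrt 2 * ((a + b) ^ ((3:ℝ)/2) / (Real.sqrt b * (1 + b * c))) := by
      ring
    rw [heq]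
    nlinarith [sqrt2_le, hR, mul_nonneg hR hs2.le]
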